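/- Let α, β, μ ∈ ℝ with β ≠ 0. Define on the open set U = {(S,I,R) ∈ ℝ³ : β·S − μ > 0} the skew-symmetric matrix-valued map π₂ with entries π₂_{SI} = −β·S·I + μ·I, π₂_{SR} = β·S·I − μ·I, π₂_{IR} = −β·S·I + μ·I, and the Hamiltonian H₂(S,I,R) = −(R + (α/β)·log(β·S − μ)). Then (i) π₂ satisfies the Jacobi identity on U: for all x ∈ U and all indices i,j,k, ∑_l (π₂_{l i}(x)·∂_l π₂_{j k}(x) + π₂_{l j}(x)·∂_l π₂_{k i}(x) + π₂_{l k}(x)·∂_l π₂_{i j}(x)) = 0; and (ii) for all (S,I,R) ∈ U, π₂·∇H₂ = (−β·S·I + μ·I, β·S·I − (α+μ)·I, α·I), the vector field of the endemic SIRS system. -/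

import Mathlib

/-- A pointwise skew-symmetric matrix-valued map satisfies the Jacobi identity on a set `U`
if for all `x ∈ U` and indices `i j k`,
`∑ l, (P_{l i}(x)·∂_l P_{j k}(x) + P_{l j}(x)·∂_l P_{k i}(x) + P_{l k}(x)·∂_l P_{i j}(x)) = 0`. -/
def JacobiIdentityOn {n : Type*} [Fintype n] [DecidableEq n]
    (P : (n → ℝ) → Matrix n n ℝ) (U : Set (n → ℝ)) : Prop :=
  ∀ x ∈ U, ∀ i j k : n,
    ∑ l : n,
      (P x l i * fderiv ℝ (fun y => P y j k) x (Pi.single l 1) +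
        P x l j * fderiv ℝ (fun y => P y k i) x (Pi.single l 1) +
        P x l k * fderiv ℝ (fun y => P y i j) x (Pi.single l 1)) = 0

/-- The Hamiltonian vector field `π(x)·∇H(x)` of a matrix-valued map `P` and Hamiltonian `H`. -/
noncomputable def hamVF {n : Type*} [Fintype n] [DecidableEq n]
    (P : (n → ℝ) → Matrix n n ℝ) (H : (n → ℝ) → ℝ) (x : n → ℝ) : n → ℝ :=
  (P x).mulVec fun j => fderiv ℝ H x (Pi.single j 1)

/-- The second Poisson structure of the endemic SIRS model, on coordinates
`(S,I,R) = (x 0, x 1, x 2)`: `π₂_{SI} = −β·S·I + μ·I`, `π₂_{SR} = β·S·I − μ·I`,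
`π₂_{IR} = −β·S·I + μ·I`, skew-symmetry determining the remaining entries. -/
noncomputable def sirsPoisson2 (β μ : ℝ) (x : Fin 3 → ℝ) : Matrix (Fin 3) (Fin 3) ℝ :=
  Matrix.of
    ![![0, -β * x 0 * x 1 + μ * x 1, β * x 0 * x 1 - μ * x 1],
      ![-(-β * x 0 * x 1 + μ * x 1), 0, -β * x 0 * x 1 + μ * x 1],
      ![-(β * x 0 * x 1 - μ * x 1), -(-β * x 0 * x 1 + μ * x 1), 0]]

private lemma sirs2_df (c β μ : ℝ) (x : Fin 3 → ℝ) (l : Fin 3) :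
    fderiv ℝ (fun y : Fin 3 → ℝ => c * (-β * y 0 * y 1 + μ * y 1)) x (Pi.single l 1) =
      c * (-β * x 1 * (Pi.single l 1 : Fin 3 → ℝ) 0 +
        (-β * x 0 + μ) * (Pi.single l 1 : Fin 3 → ℝ) 1) := by
  have hp0 : HasFDerivAt (fun y : Fin 3 → ℝ => y 0)
      (ContinuousLinearMap.proj 0 : (Fin 3 → ℝ) →L[ℝ] ℝ) x :=
    (ContinuousLinearMap.proj 0 : (Fin 3 → ℝ) →L[ℝ] ℝ).hasFDerivAt
  have hp1 : HasFDerivAt (fun y : Fin 3 → ℝ => y 1)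
      (ContinuousLinearMap.proj 1 : (Fin 3 → ℝ) →L[ℝ] ℝ) x :=
    (ContinuousLinearMap.proj 1 : (Fin 3 → ℝ) →L[ℝ] ℝ).hasFDerivAt
  have h := (((hp0.const_mul (-β)).mul hp1).add (hp1.const_mul μ)).const_mul c
  rw [HasFDerivAt.fderiv (f := fun y : Fin 3 → ℝ => c * (-β * y 0 * y 1 + μ * y 1)) h]
  simp [ContinuousLinearMap.proj]
  ring

private def sirsSgn : Matrix (Fin 3) (Fin 3) ℝ :=
  Matrix.of ![![0, 1, -1], ![-1, 0, 1], ![1, -1, 0]]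

private lemma sirs2_entry (β μ : ℝ) (j k : Fin 3) :
    (fun y : Fin 3 → ℝ => sirsPoisson2 β μ y j k) =
      fun y : Fin 3 → ℝ => sirsSgn j k * (-β * y 0 * y 1 + μ * y 1) := by
  funext y
  fin_cases j <;> fin_cases k <;> simp [sirsPoisson2, sirsSgn] <;> ring

private lemma sirsH_df (α β μ : ℝ) (hβ : β ≠ 0) (x : Fin 3 → ℝ) (hx : β * x 0 - μ > 0) (j : Fin 3) :
    fderiv ℝ (fun y : Fin 3 → ℝ => -(y 2 + α / β * Real.log (β * y 0 - μ))) x (Pi.single j 1) =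
      -((Pi.single j 1 : Fin 3 → ℝ) 2 + α / (β * x 0 - μ) * (Pi.single j 1 : Fin 3 → ℝ) 0) := by
  have hp0 : HasFDerivAt (fun y : Fin 3 → ℝ => y 0)
      (ContinuousLinearMap.proj 0 : (Fin 3 → ℝ) →L[ℝ] ℝ) x :=
    (ContinuousLinearMap.proj 0 : (Fin 3 → ℝ) →L[ℝ] ℝ).hasFDerivAt
  have hp2 : HasFDerivAt (fun y : Fin 3 → ℝ => y 2)
      (ContinuousLinearMap.proj 2 : (Fin 3 → ℝ) →L[ℝ] ℝ) x :=
    (ContinuousLinearMap.proj 2 : (Fin 3 → ℝ) →L[ℝ] ℝ).hasFDerivAt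
  have hg : HasFDerivAt (fun y : Fin 3 → ℝ => β * y 0 - μ) _ x :=
    (hp0.const_mul β).sub_const μ
  have hlog := hg.log (ne_of_gt hx)
  have hH := (hp2.add (hlog.const_mul (α / β))).neg
  rw [HasFDerivAt.fderiv (f := fun y : Fin 3 → ℝ => -(y 2 + α / β * Real.log (β * y 0 - μ))) hH]
  simp [ContinuousLinearMap.proj]
  field_simp

/-- On `U = {(S,I,R) : β·S − μ > 0}`, the second structure `π₂` of the endemic SIRS model
satisfies the Jacobi identity, and with the second Hamiltonian
`H₂ = −(R + (α/β)·log(β·S − μ))` its Hamiltonian vector field is the endemic SIRS vector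
field `(−β·S·I + μ·I, β·S·I − (α+μ)·I, α·I)`. -/
theorem endemicSIRS_second_hamiltonian_structure (α β μ : ℝ) (hβ : β ≠ 0) :
    JacobiIdentityOn (sirsPoisson2 β μ) {x : Fin 3 → ℝ | β * x 0 - μ > 0} ∧
    (∀ x : Fin 3 → ℝ, β * x 0 - μ > 0 →
      hamVF (sirsPoisson2 β μ) (fun y => -(y 2 + α / β * Real.log (β * y 0 - μ))) x =
        ![-β * x 0 * x 1 + μ * x 1, β * x 0 * x 1 - (α + μ) * x 1, α * x 1]) := by
  constructor
  · intro x hx i j k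
    simp only [sirs2_entry β μ, sirs2_df, Fin.sum_univ_three]
    have e0 := sirs2_entry β μ
    have hval : ∀ a b : Fin 3, sirsPoisson2 β μ x a b = sirsSgn a b * (-β * x 0 * x 1 + μ * x 1) := by
      intro a b; exact congrFun (sirs2_entry β μ a b) x
    simp only [hval]
    fin_cases i <;> fin_cases j <;> fin_cases k <;>
      (try simp [sirsSgn, Pi.single_apply]) <;> (try ring)
  · intro x hx
    funext i
    simp only [hamVF, Matrix.mulVec, dotProduct, Fin.sum_univ_three, sirsH_df α β μ hβ x hx]
    have hne : β * x 0 - μ ≠ 0 := ne_of_gt hx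
    fin_cases i <;>
      (try simp [sirsPoisson2, Pi.single_apply]) <;> (try field_simp) <;> (try ring)
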